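/- For every n ∈ ℕ and every ε > 0 there exists k ∈ ℕ such that for every maximal member F of the Schreier family S_n with k < min F, there exist positive reals (λ_i)_{i∈F} with Σ_{i∈F} λ_i = 1 such that Σ_{i∈Δ∩F} λ_i < ε for every m < n and every Δ ∈ S_m. (Equivalently, there exists an (n,ε)-special convex combination x = Σ_{i∈F} λ_i e_i with supp x = F.) -/

import Mathlib

/-- The Schreier families `S_n` of finite subsets of ℕ: `S_0` consists of the sets with at
most one element, and `S_{n+1}` consists of the unions `E_1 ∪ … ∪ E_k` of nonempty members
of `S_n` with `max E_i < min E_{i+1}` and `k ≤ min E_1` (together with `∅`, obtained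
as the empty union). -/
def Schreier : ℕ → Set (Finset ℕ)
  | 0 => {F | F.card ≤ 1}
  | (n + 1) => {F | ∃ (k : ℕ) (E : Fin k → Finset ℕ),
      (∀ i, E i ∈ Schreier n) ∧
      (∀ i, (E i).Nonempty) ∧
      (∀ i j : Fin k, i < j → ∀ a ∈ E i, ∀ b ∈ E j, a < b) ∧
      (∀ a ∈ F, k ≤ a) ∧
      F = Finset.univ.biUnion (fun i => E i)}

/-- `F` is a maximal member of `S_n`. -/
def SchreierMaximal (n : ℕ) (F : Finset ℕ) : Prop :=
  F ∈ Schreier n ∧ ∀ F' ∈ Schreier n, F ⊆ F' → F = F'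

open Finset

lemma schreier_zero_iff (F : Finset ℕ) : F ∈ Schreier 0 ↔ F.card ≤ 1 := Iff.rfl

lemma schreier_succ_iff (n : ℕ) (F : Finset ℕ) : F ∈ Schreier (n+1) ↔
    ∃ (k : ℕ) (E : Fin k → Finset ℕ),
      (∀ i, E i ∈ Schreier n) ∧
      (∀ i, (E i).Nonempty) ∧
      (∀ i j : Fin k, i < j → ∀ a ∈ E i, ∀ b ∈ E j, a < b) ∧
      (∀ a ∈ F, k ≤ a) ∧
      F = Finset.univ.biUnion (fun i => E i) := Iff.rfl

lemma schreier_empty (n : ℕ) : (∅ : Finset ℕ) ∈ Schreier n := by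
  cases n with
  | zero => simp [schreier_zero_iff]
  | succ n =>
    exact (schreier_succ_iff n ∅).2 ⟨0, fun i => ∅, fun i => i.elim0, fun i => i.elim0,
      fun i => i.elim0, by simp, by simp⟩

lemma schreier_singleton (n : ℕ) (a : ℕ) (ha : 1 ≤ a) : ({a} : Finset ℕ) ∈ Schreier n := by
  induction n with
  | zero => simp [schreier_zero_iff]
  | succ n ih =>
    refine (schreier_succ_iff n {a}).2 ⟨1, fun _ => {a}, fun _ => ih, fun _ => ⟨a, by simp⟩,
      ?_, by simpa, by simp⟩
    intro i j hij
    exact absurd hij (by omega)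

lemma schreier_spread : ∀ (n : ℕ) (A B : Finset ℕ) (f : ℕ → ℕ),
    A ∈ Schreier n → (∀ b ∈ B, f b ∈ A) → (∀ b ∈ B, f b ≤ b) →
    (∀ b ∈ B, ∀ b' ∈ B, b < b' → f b < f b') → B ∈ Schreier n := by
  intro n
  induction n with
  | zero =>
    intro A B f hA hmem hle hmono
    rw [schreier_zero_iff] at hA ⊢
    have hinj : Set.InjOn f B := by
      intro x hx y hy hxy
      rcases lt_trichotomy x y with h|h|h
      · exact absurd (hmono x hx y hy h) (by omega)
      · exact h
      · exact absurd (hmono y hy x hx h) (by omega)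
    calc B.card = (B.image f).card := (Finset.card_image_of_injOn hinj).symm
      _ ≤ A.card := Finset.card_le_card (fun x hx => by
          obtain ⟨b, hb, rfl⟩ := Finset.mem_image.1 hx; exact hmem b hb)
      _ ≤ 1 := hA
  | succ n ih =>
    intro A B f hA hmem hle hmono
    obtain ⟨k, E, hES, hEne, hEord, hEk, hEU⟩ := hA
    classical
    set s : Finset (Fin k) :=
      Finset.univ.filter (fun i => (B.filter (fun b => f b ∈ E i)).Nonempty) with hs
    set o := s.orderIsoOfFin rfl with ho
    refine ⟨s.card, fun j => B.filter (fun b => f b ∈ E (o j)), ?_, ?_, ?_, ?_, ?_⟩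
    · intro j
      refine ih (E (o j)) _ f (hES _) ?_ ?_ ?_
      · intro b hb; exact (Finset.mem_filter.1 hb).2
      · intro b hb; exact hle b (Finset.mem_filter.1 hb).1
      · intro b hb b' hb' h
        exact hmono b (Finset.mem_filter.1 hb).1 b' (Finset.mem_filter.1 hb').1 h
    · intro j
      exact (Finset.mem_filter.1 (o j).2).2
    · intro i j hij b hb b' hb'
      have hoij : (o i : Fin k) < (o j : Fin k) := o.strictMono hij
      have hfb : f b ∈ E (o i) := (Finset.mem_filter.1 hb).2
      have hfb' : f b' ∈ E (o j) := (Finset.mem_filter.1 hb').2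
      have hlt := hEord _ _ hoij _ hfb _ hfb'
      by_contra h
      push_neg at h
      rcases lt_or_eq_of_le h with h | h
      · exact absurd (hmono b' (Finset.mem_filter.1 hb').1 b (Finset.mem_filter.1 hb).1 h)
          (by omega)
      · rw [h] at hlt; omega
    · intro a ha
      have h1 : s.card ≤ k := le_trans (Finset.card_le_card (Finset.filter_subset _ _)) (by simp)
      have h2 : k ≤ f a := hEk _ (hmem a ha)
      exact le_trans h1 (le_trans h2 (hle a ha))
    · ext b
      simp only [Finset.mem_biUnion, Finset.mem_univ, true_and, Finset.mem_filter]
      constructor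
      · intro hb
        have : f b ∈ A := hmem b hb
        rw [hEU] at this
        obtain ⟨i, _, hi⟩ := Finset.mem_biUnion.1 this
        have his : i ∈ s := Finset.mem_filter.2 ⟨Finset.mem_univ _, ⟨b, Finset.mem_filter.2 ⟨hb, hi⟩⟩⟩
        refine ⟨o.symm ⟨i, his⟩, hb, ?_⟩
        have : (o (o.symm ⟨i, his⟩) : Fin k) = i := by
          rw [OrderIso.apply_symm_apply]
        rw [this]; exact hi
      · rintro ⟨j, hb, -⟩; exact hb

lemma schreier_subset (n : ℕ) {A B : Finset ℕ} (hBA : B ⊆ A) (hA : A ∈ Schreier n) :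
    B ∈ Schreier n :=
  schreier_spread n A B id hA (fun b hb => hBA hb) (fun _ _ => le_rfl) (fun _ _ _ _ h => h)

lemma schreier_le_succ (n : ℕ) {F : Finset ℕ} (hF : F ∈ Schreier n)
    (hpos : ∀ a ∈ F, 1 ≤ a) : F ∈ Schreier (n+1) := by
  induction n generalizing F with
  | zero =>
    rw [schreier_zero_iff] at hF
    rcases Finset.card_le_one_iff_subset_singleton.1 hF with ⟨a, ha⟩
    rcases Finset.subset_singleton_iff.1 ha with rfl | rfl
    · exact schreier_empty 1
    · exact schreier_singleton 1 a (hpos a (by simp))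
  | succ n ih =>
    obtain ⟨k, E, hES, hEne, hEord, hEk, hEU⟩ := hF
    refine ⟨k, E, fun i => ih (hES i) ?_, hEne, hEord, hEk, hEU⟩
    intro a ha
    refine hpos a ?_
    rw [hEU]
    exact Finset.mem_biUnion.2 ⟨i, Finset.mem_univ _, ha⟩

lemma schreier_mono {m n : ℕ} (h : m ≤ n) {F : Finset ℕ} (hF : F ∈ Schreier m)
    (hpos : ∀ a ∈ F, 1 ≤ a) : F ∈ Schreier n := by
  induction n with
  | zero => rcases Nat.le_zero.1 h with rfl; exact hF
  | succ n ih =>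
    rcases Nat.lt_or_ge m (n+1) with h' | h'
    · exact schreier_le_succ n (ih (by omega)) hpos
    · have : m = n+1 := by omega
      rw [this] at hF; exact hF

lemma schreier_one_of_card (F : Finset ℕ) (h : ∀ a ∈ F, F.card ≤ a) : F ∈ Schreier 1 := by
  classical
  refine (schreier_succ_iff 0 F).2 ⟨F.card, fun i => {(F.orderIsoOfFin rfl i : ℕ)},
    fun i => by simp [schreier_zero_iff], fun i => Finset.singleton_nonempty _, ?_, ?_, ?_⟩
  · intro i j hij a ha b hb
    simp only [Finset.mem_singleton] at ha hb
    rw [ha, hb]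
    exact (F.orderIsoOfFin rfl).strictMono hij
  · exact h
  · ext a
    simp only [Finset.mem_biUnion, Finset.mem_univ, true_and, Finset.mem_singleton]
    constructor
    · intro ha
      exact ⟨(F.orderIsoOfFin rfl).symm ⟨a, ha⟩, by simp⟩
    · rintro ⟨i, rfl⟩
      exact (F.orderIsoOfFin rfl i).2

lemma schreier_one_card {F : Finset ℕ} (hF : F ∈ Schreier 1) : ∀ a ∈ F, F.card ≤ a := by
  obtain ⟨k, E, hES, hEne, hEord, hEk, hEU⟩ := hF
  have hdisj : ∀ i ∈ (Finset.univ : Finset (Fin k)), ∀ j ∈ Finset.univ, i ≠ j →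
      Disjoint (E i) (E j) := by
    intro i _ j _ hij
    rw [Finset.disjoint_left]
    intro a hai haj
    rcases lt_or_gt_of_ne hij with h | h
    · exact absurd (hEord i j h a hai a haj) (by omega)
    · exact absurd (hEord j i h a haj a hai) (by omega)
  have hcard : F.card = k := by
    rw [hEU, Finset.card_biUnion hdisj]
    have : ∀ i : Fin k, (E i).card = 1 := by
      intro i
      have h1 := (schreier_zero_iff _).1 (hES i)
      have h2 := Finset.card_pos.2 (hEne i)
      omega
    simp [this]
  intro a ha
  rw [hcard]
  exact hEk a ha

lemma schreier_pos {n : ℕ} {F : Finset ℕ} (hn : 1 ≤ n) (hF : F ∈ Schreier n)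
    (hne : F.Nonempty) : ∀ a ∈ F, 1 ≤ a := by
  rcases n with _ | n
  · omega
  obtain ⟨k, E, hES, hEne, hEord, hEk, hEU⟩ := hF
  have hk : 1 ≤ k := by
    obtain ⟨a, ha⟩ := hne
    rw [hEU] at ha
    obtain ⟨i, _, _⟩ := Finset.mem_biUnion.1 ha
    exact Nat.one_le_iff_ne_zero.2 (fun h => (h ▸ i).elim0)
  intro a ha
  exact le_trans hk (hEk a ha)

lemma schreier_rotate (n : ℕ) {F : Finset ℕ} (hF : F ∈ Schreier n) (hne : F.Nonempty) {b : ℕ}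
    (hb : ∀ a ∈ F, a < b) : insert b (F.erase (F.min' hne)) ∈ Schreier n := by
  classical
  set f : ℕ → ℕ := fun c =>
    if h : (F.filter (· < c)).Nonempty then (F.filter (· < c)).max' h else 0 with hf
  have key : ∀ c ∈ insert b (F.erase (F.min' hne)),
      f c ∈ F ∧ f c < c ∧ (∀ a ∈ F, a < c → a ≤ f c) := by
    intro c hc
    have hcne : (F.filter (· < c)).Nonempty := by
      rcases Finset.mem_insert.1 hc with rfl | hc'
      · obtain ⟨a, ha⟩ := hne
        exact ⟨a, Finset.mem_filter.2 ⟨ha, hb a ha⟩⟩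
      · have h1 : c ∈ F := Finset.mem_of_mem_erase hc'
        have h2 : c ≠ F.min' hne := Finset.ne_of_mem_erase hc'
        have h3 : F.min' hne < c := lt_of_le_of_ne (Finset.min'_le F c h1) (Ne.symm h2)
        exact ⟨F.min' hne, Finset.mem_filter.2 ⟨Finset.min'_mem F hne, h3⟩⟩
    have hfc : f c = (F.filter (· < c)).max' hcne := by rw [hf]; simp [hcne]
    have h1 : f c ∈ F.filter (· < c) := hfc ▸ Finset.max'_mem _ hcne
    refine ⟨(Finset.mem_filter.1 h1).1, (Finset.mem_filter.1 h1).2, ?_⟩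
    intro a ha hac
    rw [hfc]
    exact Finset.le_max' (F.filter (· < c)) a (Finset.mem_filter.2 ⟨ha, hac⟩)
  refine schreier_spread n F _ f hF (fun c hc => (key c hc).1)
    (fun c hc => le_of_lt (key c hc).2.1) ?_
  intro c hc c' hc' hlt
  have hcF : c ∈ F := by
    rcases Finset.mem_insert.1 hc with rfl | h
    · rcases Finset.mem_insert.1 hc' with rfl | h'
      · omega
      · exact absurd (hb c' (Finset.mem_of_mem_erase h')) (by omega)
    · exact Finset.mem_of_mem_erase h
  calc f c < c := (key c hc).2.1
    _ ≤ f c' := (key c' hc').2.2 c hcF hlt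

lemma schreier_rot (n k : ℕ) (E : Fin k → Finset ℕ) (i₀ : Fin k) (x : ℕ)
    (hS : ∀ i, E i ∈ Schreier n) (hne : ∀ i, (E i).Nonempty)
    (hord : ∀ i j : Fin k, i < j → ∀ a ∈ E i, ∀ b ∈ E j, a < b)
    (hx : ∀ i, ∀ a ∈ E i, a < x) (hx1 : 1 ≤ x)
    (hpos : ∀ i, ∀ a ∈ E i, 1 ≤ a)
    (hext : ∀ y, (∀ a ∈ E i₀, a < y) → 1 ≤ y → insert y (E i₀) ∈ Schreier n) :
    ∃ E' : Fin k → Finset ℕ,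
      (∀ i, E' i ∈ Schreier n) ∧ (∀ i, (E' i).Nonempty) ∧
      (∀ i j : Fin k, i < j → ∀ a ∈ E' i, ∀ b ∈ E' j, a < b) ∧
      Finset.univ.biUnion (fun i => E' i) = insert x (Finset.univ.biUnion (fun i => E i)) := by
  classical
  set nxt : Fin k → ℕ :=
    fun i => if h : (i:ℕ)+1 < k then (E ⟨(i:ℕ)+1, h⟩).min' (hne _) else x with hnxt
  have hnxt_in : ∀ (i : Fin k) (h : (i:ℕ)+1 < k), nxt i = (E ⟨(i:ℕ)+1, h⟩).min' (hne _) := by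
    intro i h; rw [hnxt]; simp only [dif_pos h]
  have hnxt_last : ∀ (i : Fin k), ¬ ((i:ℕ)+1 < k) → nxt i = x := by
    intro i h; rw [hnxt]; simp only [dif_neg h]
  have hnxt_gt : ∀ i : Fin k, ∀ a ∈ E i, a < nxt i := by
    intro i a ha
    by_cases h : (i:ℕ)+1 < k
    · rw [hnxt_in i h]
      exact hord i ⟨(i:ℕ)+1, h⟩ (by simp [Fin.lt_def]) a ha _ (Finset.min'_mem _ _)
    · rw [hnxt_last i h]
      exact hx i a ha
  have hnxt_pos : ∀ i : Fin k, 1 ≤ nxt i := by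
    intro i
    by_cases h : (i:ℕ)+1 < k
    · rw [hnxt_in i h]; exact hpos _ _ (Finset.min'_mem _ _)
    · rw [hnxt_last i h]; exact hx1
  have hnxt_le : ∀ i j : Fin k, (i:ℕ) < (j:ℕ) → ∀ b ∈ E j, nxt i ≤ b := by
    intro i j hij b hb
    have h : (i:ℕ)+1 < k := by omega
    rw [hnxt_in i h]
    rcases Nat.lt_or_ge ((i:ℕ)+1) (j:ℕ) with h' | h'
    · exact le_of_lt (hord ⟨(i:ℕ)+1, h⟩ j (by simp [Fin.lt_def, h']) _ (Finset.min'_mem _ _) b hb)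
    · have heq : (⟨(i:ℕ)+1, h⟩ : Fin k) = j := by
        apply Fin.ext; simp; omega
      rw [heq]
      exact Finset.min'_le _ _ hb
  have hnxt_lt_erase : ∀ i j : Fin k, (i:ℕ) < (j:ℕ) →
      ∀ b ∈ (E j).erase ((E j).min' (hne j)), nxt i < b := by
    intro i j hij b hb
    have hbE : b ∈ E j := Finset.mem_of_mem_erase hb
    have h1 : nxt i ≤ b := hnxt_le i j hij b hbE
    rcases lt_or_eq_of_le h1 with h | h
    · exact h
    have h2 : (E j).min' (hne j) ≤ b := Finset.min'_le _ _ hbE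
    have h3 : b ≠ (E j).min' (hne j) := Finset.ne_of_mem_erase hb
    have h4 : nxt i ≤ (E j).min' (hne j) := hnxt_le i j hij _ (Finset.min'_mem _ _)
    omega
  have hnxt_lt_nxt : ∀ i j : Fin k, (i:ℕ) < (j:ℕ) → nxt i < nxt j := by
    intro i j hij
    calc nxt i ≤ (E j).min' (hne j) := hnxt_le i j hij _ (Finset.min'_mem _ _)
      _ < nxt j := hnxt_gt j _ (Finset.min'_mem _ _)
  set E' : Fin k → Finset ℕ := fun i =>
    if (i:ℕ) < (i₀:ℕ) then E i
    else if (i:ℕ) = (i₀:ℕ) then insert (nxt i₀) (E i₀)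
    else insert (nxt i) ((E i).erase ((E i).min' (hne i))) with hE'
  have hE'lt : ∀ i : Fin k, (i:ℕ) < (i₀:ℕ) → E' i = E i := by
    intro i h; rw [hE']; simp only [if_pos h]
  have hE'eq : ∀ i : Fin k, (i:ℕ) = (i₀:ℕ) → E' i = insert (nxt i₀) (E i₀) := by
    intro i h; rw [hE']; simp only [if_neg (by omega : ¬ (i:ℕ) < (i₀:ℕ)), if_pos h]
  have hE'gt : ∀ i : Fin k, (i₀:ℕ) < (i:ℕ) →
      E' i = insert (nxt i) ((E i).erase ((E i).min' (hne i))) := by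
    intro i h
    rw [hE']
    simp only [if_neg (by omega : ¬ (i:ℕ) < (i₀:ℕ)), if_neg (by omega : ¬ (i:ℕ) = (i₀:ℕ))]
  have hmem' : ∀ i : Fin k, ∀ a ∈ E' i, a ∈ E i ∨ a = nxt i := by
    intro i a ha
    rcases lt_trichotomy (i:ℕ) (i₀:ℕ) with h | h | h
    · rw [hE'lt i h] at ha; exact Or.inl ha
    · rw [hE'eq i h] at ha
      have hi : i = i₀ := Fin.ext h
      rcases Finset.mem_insert.1 ha with h' | h'
      · exact Or.inr (by rw [hi, h'])
      · exact Or.inl (hi ▸ h')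
    · rw [hE'gt i h] at ha
      rcases Finset.mem_insert.1 ha with h' | h'
      · exact Or.inr h'
      · exact Or.inl (Finset.mem_of_mem_erase h')
  refine ⟨E', ?_, ?_, ?_, ?_⟩
  · intro i
    rcases lt_trichotomy (i:ℕ) (i₀:ℕ) with h | h | h
    · rw [hE'lt i h]; exact hS i
    · rw [hE'eq i h]; exact hext (nxt i₀) (hnxt_gt i₀) (hnxt_pos i₀)
    · rw [hE'gt i h]; exact schreier_rotate n (hS i) (hne i) (hnxt_gt i)
  · intro i
    rcases lt_trichotomy (i:ℕ) (i₀:ℕ) with h | h | h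
    · rw [hE'lt i h]; exact hne i
    · rw [hE'eq i h]; exact Finset.insert_nonempty _ _
    · rw [hE'gt i h]; exact Finset.insert_nonempty _ _
  · intro i j hij a ha b hb
    have hijn : (i:ℕ) < (j:ℕ) := hij
    rcases lt_trichotomy (j:ℕ) (i₀:ℕ) with hj | hj | hj
    · -- j < i₀ : then i < i₀, a ∈ E i, b ∈ E j
      rw [hE'lt j hj] at hb
      rw [hE'lt i (by omega)] at ha
      exact hord i j hij a ha b hb
    · -- j = i₀, so i < i₀, a ∈ E i
      have hi : (i:ℕ) < (i₀:ℕ) := by omega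
      rw [hE'lt i hi] at ha
      rw [hE'eq j hj] at hb
      have hj' : j = i₀ := Fin.ext hj
      rcases Finset.mem_insert.1 hb with rfl | hbE
      · have h1 : a < (E i₀).min' (hne i₀) := by
          rw [← hj']
          exact hord i j hij a ha _ (Finset.min'_mem _ _)
        exact lt_trans h1 (hnxt_gt i₀ _ (Finset.min'_mem _ _))
      · exact hord i i₀ (by rw [← hj']; exact hij) a ha b hbE
    · -- j > i₀
      have ha' : a ∈ E i ∨ a = nxt i := hmem' i a ha
      rw [hE'gt j hj] at hb
      rcases Finset.mem_insert.1 hb with rfl | hbE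
      · rcases ha' with haE | hanxt
        · calc a < (E j).min' (hne j) := hord i j hij a haE _ (Finset.min'_mem _ _)
            _ < nxt j := hnxt_gt j _ (Finset.min'_mem _ _)
        · rw [hanxt]; exact hnxt_lt_nxt i j hijn
      · rcases ha' with haE | hanxt
        · exact hord i j hij a haE b (Finset.mem_of_mem_erase hbE)
        · rw [hanxt]; exact hnxt_lt_erase i j hijn b hbE
  · ext y
    simp only [Finset.mem_biUnion, Finset.mem_univ, true_and, Finset.mem_insert]
    constructor
    · rintro ⟨i, hi⟩
      rcases hmem' i y hi with h | h
      · exact Or.inr ⟨i, h⟩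
      · by_cases h' : (i:ℕ)+1 < k
        · rw [hnxt_in i h'] at h
          exact Or.inr ⟨⟨(i:ℕ)+1, h'⟩, h ▸ Finset.min'_mem _ _⟩
        · rw [hnxt_last i h'] at h
          exact Or.inl h
    · have hk : 0 < k := i₀.pos
      rintro (rfl | ⟨i, hi⟩)
      · -- y = x : it's in E' of the last block
        have hlk : k - 1 < k := by omega
        set last : Fin k := ⟨k-1, hlk⟩ with hlast
        have hnl : nxt last = y := hnxt_last last (by simp [hlast]; omega)
        have hi₀l : (i₀:ℕ) ≤ k-1 := by omega
        refine ⟨last, ?_⟩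
        rcases lt_or_eq_of_le hi₀l with h | h
        · rw [hE'gt last (by simpa [hlast] using h), ← hnl]
          exact Finset.mem_insert_self _ _
        · have h' : (last:ℕ) = (i₀:ℕ) := by simp [hlast]; omega
          rw [hE'eq last h']
          have hli : i₀ = last := Fin.ext h'.symm
          rw [hli, hnl]
          exact Finset.mem_insert_self _ _
      · rcases lt_trichotomy (i:ℕ) (i₀:ℕ) with h | h | h
        · exact ⟨i, by rw [hE'lt i h]; exact hi⟩
        · refine ⟨i, ?_⟩
          rw [hE'eq i h]
          have hii : i = i₀ := Fin.ext h
          rw [hii] at hi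
          exact Finset.mem_insert_of_mem hi
        · by_cases hmin : y = (E i).min' (hne i)
          · -- y is the min of block i; it equals nxt (i-1)
            have hi1 : (i:ℕ) - 1 < k := by omega
            set ip : Fin k := ⟨(i:ℕ)-1, hi1⟩ with hip
            have h2 : (ip:ℕ)+1 < k := by simp [hip]; omega
            have hnip : nxt ip = y := by
              rw [hnxt_in ip h2]
              have heq : (⟨(ip:ℕ)+1, h2⟩ : Fin k) = i := by apply Fin.ext; simp [hip]; omega
              rw [heq, hmin]
            refine ⟨ip, ?_⟩
            rcases lt_or_eq_of_le (by simp [hip]; omega : (i₀:ℕ) ≤ (ip:ℕ)) with h' | h'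
            · rw [hE'gt ip h', ← hnip]
              exact Finset.mem_insert_self _ _
            · rw [hE'eq ip h'.symm, ← hnip]
              have hii : i₀ = ip := Fin.ext h'
              rw [hii]
              exact Finset.mem_insert_self _ _
          · refine ⟨i, ?_⟩
            rw [hE'gt i h]
            exact Finset.mem_insert_of_mem (Finset.mem_erase.2 ⟨hmin, hi⟩)

lemma schreier_extend : ∀ n : ℕ, ∀ H ∈ Schreier n, ∀ G : Finset ℕ, G ⊆ H → G ≠ H →
    ∀ x : ℕ, 1 ≤ x → (∀ a ∈ G, a < x) → insert x G ∈ Schreier n := by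
  intro n
  induction n with
  | zero =>
    intro H hH G hGH hne x hx1 hxG
    rw [schreier_zero_iff] at hH ⊢
    have hss : G ⊂ H := ssubset_of_subset_of_ne hGH hne
    have h0 : G.card = 0 := by
      have := Finset.card_lt_card hss
      omega
    rw [Finset.card_eq_zero] at h0
    subst h0
    simp
  | succ n ih =>
    classical
    intro H hH G hGH hne x hx1 hxG
    obtain ⟨k, D, hDS, hDne, hDord, hDk, hDU⟩ := hH
    by_cases hG : G = ∅
    · subst hG; simpa using schreier_singleton (n+1) x hx1
    have hGne : G.Nonempty := Finset.nonempty_iff_ne_empty.2 hG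
    obtain ⟨g₀, hg₀⟩ := hGne
    have hk1 : 1 ≤ k := by
      have : g₀ ∈ H := hGH hg₀
      rw [hDU] at this
      obtain ⟨i, -, -⟩ := Finset.mem_biUnion.1 this
      exact Nat.one_le_iff_ne_zero.2 (fun h => (h ▸ i).elim0)
    have hkx : k ≤ x := by
      have h1 : k ≤ g₀ := hDk g₀ (hGH hg₀)
      have h2 : g₀ < x := hxG g₀ hg₀
      omega
    set s : Finset (Fin k) := Finset.univ.filter (fun i => (G ∩ D i).Nonempty) with hs
    rcases Nat.lt_or_ge s.card k with hcard | hcard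
    · -- append {x} as a new block
      set o := s.orderIsoOfFin rfl with ho
      refine ⟨s.card + 1, fun j => if h : (j:ℕ) < s.card then G ∩ D (o ⟨j, h⟩) else {x},
        ?_, ?_, ?_, ?_, ?_⟩
      · intro j
        by_cases h : (j:ℕ) < s.card
        · simp only [dif_pos h]
          exact schreier_subset n Finset.inter_subset_right (hDS _)
        · simp only [dif_neg h]
          exact schreier_singleton n x hx1
      · intro j
        by_cases h : (j:ℕ) < s.card
        · simp only [dif_pos h]
          exact (Finset.mem_filter.1 (o ⟨j, h⟩).2).2
        · simp only [dif_neg h]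
          exact Finset.singleton_nonempty _
      · intro i j hij a ha b hb
        have hijn : (i:ℕ) < (j:ℕ) := hij
        by_cases hj : (j:ℕ) < s.card
        · have hi : (i:ℕ) < s.card := by omega
          simp only [dif_pos hi] at ha
          simp only [dif_pos hj] at hb
          have hlt : (o ⟨i, hi⟩ : Fin k) < (o ⟨j, hj⟩ : Fin k) :=
            o.strictMono (show (⟨i, hi⟩ : Fin s.card) < ⟨j, hj⟩ from hijn)
          exact hDord _ _ hlt a (Finset.mem_inter.1 ha).2 b (Finset.mem_inter.1 hb).2
        · simp only [dif_neg hj] at hb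
          rw [Finset.mem_singleton] at hb
          subst hb
          have hi : (i:ℕ) < s.card := by omega
          simp only [dif_pos hi] at ha
          exact hxG a (Finset.mem_inter.1 ha).1
      · intro a ha
        rcases Finset.mem_insert.1 ha with rfl | haG
        · omega
        · have := hDk a (hGH haG)
          omega
      · ext a
        simp only [Finset.mem_biUnion, Finset.mem_univ, true_and, Finset.mem_insert]
        constructor
        · rintro (rfl | haG)
          · refine ⟨⟨s.card, by omega⟩, ?_⟩
            simp only [dif_neg (lt_irrefl s.card)]
            exact Finset.mem_singleton_self _
          · have : a ∈ H := hGH haG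
            rw [hDU] at this
            obtain ⟨i, -, hi⟩ := Finset.mem_biUnion.1 this
            have his : i ∈ s := Finset.mem_filter.2 ⟨Finset.mem_univ _,
              ⟨a, Finset.mem_inter.2 ⟨haG, hi⟩⟩⟩
            have hlt : ((o.symm ⟨i, his⟩ : Fin s.card) : ℕ) < s.card := (o.symm ⟨i, his⟩).2
            refine ⟨⟨(o.symm ⟨i, his⟩ : Fin s.card), by omega⟩, ?_⟩
            simp only [dif_pos hlt]
            have : (⟨((o.symm ⟨i, his⟩ : Fin s.card) : ℕ), hlt⟩ : Fin s.card)
                = o.symm ⟨i, his⟩ := by apply Fin.ext; rfl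
            rw [this, OrderIso.apply_symm_apply]
            exact Finset.mem_inter.2 ⟨haG, hi⟩
        · rintro ⟨j, hj⟩
          by_cases h : (j:ℕ) < s.card
          · simp only [dif_pos h] at hj
            exact Or.inr (Finset.mem_inter.1 hj).1
          · simp only [dif_neg h] at hj
            exact Or.inl (Finset.mem_singleton.1 hj)
    · -- all blocks meet G
      have hsuniv : s = Finset.univ := Finset.eq_univ_of_card s (le_antisymm
        (Finset.card_le_card (Finset.subset_univ s)) (by simpa using hcard))
      have hallne : ∀ i : Fin k, (G ∩ D i).Nonempty := by
        intro i
        have : i ∈ s := hsuniv ▸ Finset.mem_univ i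
        exact (Finset.mem_filter.1 this).2
      set u : Finset (Fin k) := Finset.univ.filter (fun i => G ∩ D i ≠ D i) with hu
      have hune : u.Nonempty := by
        by_contra h
        rw [Finset.not_nonempty_iff_eq_empty] at h
        apply hne
        apply Finset.Subset.antisymm hGH
        intro a haH
        rw [hDU] at haH
        obtain ⟨i, -, hi⟩ := Finset.mem_biUnion.1 haH
        have : G ∩ D i = D i := by
          by_contra h'
          have : i ∈ u := Finset.mem_filter.2 ⟨Finset.mem_univ _, h'⟩
          rw [h] at this
          exact absurd this (Finset.notMem_empty _)
        rw [← this] at hi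
        exact (Finset.mem_inter.1 hi).1
      set istar := u.max' hune with histar
      have histaru : G ∩ D istar ≠ D istar := (Finset.mem_filter.1 (u.max'_mem hune)).2
      have hgtistar : ∀ i : Fin k, istar < i → G ∩ D i = D i := by
        intro i hi
        by_contra h'
        have : i ∈ u := Finset.mem_filter.2 ⟨Finset.mem_univ _, h'⟩
        exact absurd (Finset.le_max' u i this) (not_le.2 hi)
      set Et : Fin k → Finset ℕ := fun i => if i ≤ istar then G ∩ D i else D i with hEt
      have hEtsubD : ∀ i, Et i ⊆ D i := by
        intro i
        rw [hEt]
        by_cases h : i ≤ istar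
        · simp only [if_pos h]; exact Finset.inter_subset_right
        · simp only [if_neg h]; exact Finset.Subset.refl _
      have hEtsubG : ∀ i, Et i ⊆ G := by
        intro i
        rw [hEt]
        by_cases h : i ≤ istar
        · simp only [if_pos h]; exact Finset.inter_subset_left
        · simp only [if_neg h]
          rw [← hgtistar i (lt_of_not_ge h)]
          exact Finset.inter_subset_left
      have hEtU : Finset.univ.biUnion (fun i => Et i) = G := by
        apply Finset.Subset.antisymm
        · intro a ha
          obtain ⟨i, -, hi⟩ := Finset.mem_biUnion.1 ha
          exact hEtsubG i hi
        · intro a haG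
          have : a ∈ H := hGH haG
          rw [hDU] at this
          obtain ⟨i, -, hi⟩ := Finset.mem_biUnion.1 this
          refine Finset.mem_biUnion.2 ⟨i, Finset.mem_univ _, ?_⟩
          rw [hEt]
          by_cases h : i ≤ istar
          · simp only [if_pos h]; exact Finset.mem_inter.2 ⟨haG, hi⟩
          · simp only [if_neg h]; exact hi
      obtain ⟨E', hE'S, hE'ne, hE'ord, hE'U⟩ := schreier_rot n k Et istar x
        (fun i => schreier_subset n (hEtsubD i) (hDS i))
        (fun i => by
          rw [hEt]
          by_cases h : i ≤ istar
          · simp only [if_pos h]; exact hallne i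
          · simp only [if_neg h]; exact hDne i)
        (fun i j hij a ha b hb => hDord i j hij a (hEtsubD i ha) b (hEtsubD j hb))
        (fun i a ha => hxG a (hEtsubG i ha))
        hx1
        (fun i a ha => le_trans hk1 (hDk a (hDU ▸ Finset.mem_biUnion.2
          ⟨i, Finset.mem_univ _, hEtsubD i ha⟩)))
        (by
          intro y hy hy1
          have hEtistar : Et istar = G ∩ D istar := by rw [hEt]; simp
          rw [hEtistar] at hy ⊢
          exact ih (D istar) (hDS istar) (G ∩ D istar) Finset.inter_subset_right histaru
            y hy1 hy)
      refine ⟨k, E', hE'S, hE'ne, hE'ord, ?_, ?_⟩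
      · intro a ha
        rcases Finset.mem_insert.1 ha with rfl | haG
        · exact hkx
        · exact hDk a (hGH haG)
      · rw [hE'U, hEtU]

lemma schreier_append (n k : ℕ) (E : Fin k → Finset ℕ) (x : ℕ)
    (hS : ∀ i, E i ∈ Schreier n) (hne : ∀ i, (E i).Nonempty)
    (hord : ∀ i j : Fin k, i < j → ∀ a ∈ E i, ∀ b ∈ E j, a < b)
    (hx : ∀ i, ∀ a ∈ E i, a < x) (hx1 : 1 ≤ x)
    (hcount : ∀ a ∈ insert x (Finset.univ.biUnion (fun i => E i)), k+1 ≤ a) :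
    insert x (Finset.univ.biUnion (fun i => E i)) ∈ Schreier (n+1) := by
  classical
  refine ⟨k+1, fun j => if h : (j:ℕ) < k then E ⟨j, h⟩ else {x}, ?_, ?_, ?_, hcount, ?_⟩
  · intro j
    by_cases h : (j:ℕ) < k
    · simp only [dif_pos h]; exact hS _
    · simp only [dif_neg h]; exact schreier_singleton n x hx1
  · intro j
    by_cases h : (j:ℕ) < k
    · simp only [dif_pos h]; exact hne _
    · simp only [dif_neg h]; exact Finset.singleton_nonempty _
  · intro i j hij a ha b hb
    have hijn : (i:ℕ) < (j:ℕ) := hij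
    by_cases hj : (j:ℕ) < k
    · have hi : (i:ℕ) < k := by omega
      simp only [dif_pos hi] at ha
      simp only [dif_pos hj] at hb
      exact hord ⟨i, hi⟩ ⟨j, hj⟩ (Fin.mk_lt_mk.2 hijn) a ha b hb
    · simp only [dif_neg hj] at hb
      rw [Finset.mem_singleton] at hb
      subst hb
      have hi : (i:ℕ) < k := by omega
      simp only [dif_pos hi] at ha
      exact hx _ a ha
  · ext a
    simp only [Finset.mem_insert, Finset.mem_biUnion, Finset.mem_univ, true_and]
    constructor
    · rintro (rfl | ⟨i, hi⟩)
      · exact ⟨⟨k, by omega⟩, by simp only [dif_neg (lt_irrefl k)]; exact Finset.mem_singleton_self _⟩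
      · exact ⟨⟨(i:ℕ), by omega⟩, by simp only [dif_pos i.2]; exact hi⟩
    · rintro ⟨j, hj⟩
      by_cases h : (j:ℕ) < k
      · simp only [dif_pos h] at hj
        exact Or.inr ⟨_, hj⟩
      · simp only [dif_neg h] at hj
        exact Or.inl (Finset.mem_singleton.1 hj)

lemma schreier_maximal_nonempty {n : ℕ} {F : Finset ℕ} (hF : SchreierMaximal n F) :
    F.Nonempty := by
  rw [Finset.nonempty_iff_ne_empty]
  intro h
  subst h
  have h1 : ({1} : Finset ℕ) ∈ Schreier n := schreier_singleton n 1 le_rfl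
  have := hF.2 {1} h1 (Finset.empty_subset _)
  exact Finset.singleton_ne_empty 1 this.symm

lemma schreier_maximal_decomp (n : ℕ) {F : Finset ℕ} (hF : SchreierMaximal (n+1) F) :
    ∃ (k : ℕ) (E : Fin k → Finset ℕ),
      k ∈ F ∧ (∀ a ∈ F, k ≤ a) ∧
      (∀ i, SchreierMaximal n (E i)) ∧ (∀ i, (E i).Nonempty) ∧
      (∀ i j, i < j → ∀ a ∈ E i, ∀ b ∈ E j, a < b) ∧
      F = Finset.univ.biUnion (fun i => E i) := by
  classical
  have hne : F.Nonempty := schreier_maximal_nonempty hF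
  obtain ⟨k, E, hES, hEne, hEord, hEk, hEU⟩ := hF.1
  have hpos : ∀ a ∈ F, 1 ≤ a := schreier_pos (by omega) hF.1 hne
  set M := F.max' hne + 1 with hM
  have hMF : ∀ a ∈ F, a < M := fun a ha => by
    have := Finset.le_max' F a ha; omega
  have hM1 : 1 ≤ M := by
    have := hpos _ (Finset.max'_mem F hne); omega
  have hMnF : M ∉ F := fun h => absurd (hMF M h) (by omega)
  have hEposF : ∀ i, ∀ a ∈ E i, a ∈ F := by
    intro i a ha
    rw [hEU]
    exact Finset.mem_biUnion.2 ⟨i, Finset.mem_univ _, ha⟩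
  have hkmin : k ≤ F.min' hne := hEk _ (Finset.min'_mem F hne)
  have hk1 : 1 ≤ k := by
    obtain ⟨a, ha⟩ := hne
    rw [hEU] at ha
    obtain ⟨i, -, -⟩ := Finset.mem_biUnion.1 ha
    exact Nat.one_le_iff_ne_zero.2 (fun h => (h ▸ i).elim0)
  have hkM : k ≤ M := by
    have := hkmin
    have h2 : F.min' hne ≤ F.max' hne := Finset.min'_le _ _ (Finset.max'_mem F hne)
    omega
  have hkeq : k = F.min' hne := by
    by_contra h
    have hklt : k < F.min' hne := by omega
    have hmem : insert M F ∈ Schreier (n+1) := by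
      have := schreier_append n k E M hES hEne hEord
        (fun i a ha => hMF a (hEposF i a ha)) hM1
        (by
          intro a ha
          rw [← hEU] at ha
          rcases Finset.mem_insert.1 ha with rfl | haF
          · have : F.min' hne ≤ F.max' hne := Finset.min'_le _ _ (Finset.max'_mem F hne)
            omega
          · have := Finset.min'_le F a haF
            omega)
      rw [← hEU] at this
      exact this
    have := hF.2 _ hmem (Finset.subset_insert _ _)
    exact hMnF (this ▸ Finset.mem_insert_self M F)
  have hEmax : ∀ i, SchreierMaximal n (E i) := by
    intro i
    by_contra h
    rw [SchreierMaximal] at h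
    push_neg at h
    obtain ⟨F', hF'S, hsub, hne'⟩ := h (hES i)
    obtain ⟨E', hE'S, hE'ne, hE'ord, hE'U⟩ := schreier_rot n k E i M hES hEne hEord
      (fun i a ha => hMF a (hEposF i a ha)) hM1
      (fun i a ha => hpos a (hEposF i a ha))
      (fun y hy hy1 => schreier_extend n F' hF'S (E i) hsub hne' y hy1 hy)
    have hmem : insert M F ∈ Schreier (n+1) := by
      refine ⟨k, E', hE'S, hE'ne, hE'ord, ?_, ?_⟩
      · intro a ha
        rcases Finset.mem_insert.1 ha with rfl | haF
        · exact hkM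
        · exact hEk a haF
      · rw [hE'U, ← hEU]
    have := hF.2 _ hmem (Finset.subset_insert _ _)
    exact hMnF (this ▸ Finset.mem_insert_self M F)
  exact ⟨k, E, hkeq ▸ Finset.min'_mem F hne, hEk, hEmax, hEne, hEord, hEU⟩

lemma schreier_maximal_min_le_card {n : ℕ} (hn : 1 ≤ n) {F : Finset ℕ}
    (hF : SchreierMaximal n F) (hne : F.Nonempty) : F.min' hne ≤ F.card := by
  by_contra h
  push_neg at h
  have hc1 : 1 ≤ F.card := Finset.card_pos.2 hne
  set M := F.max' hne + 1 with hM
  have hMnF : M ∉ F := fun hMF => by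
    have := Finset.le_max' F M hMF; omega
  have hcard : (insert M F).card = F.card + 1 := Finset.card_insert_of_notMem hMnF
  have hmem1 : insert M F ∈ Schreier 1 := by
    apply schreier_one_of_card
    intro a ha
    rw [hcard]
    rcases Finset.mem_insert.1 ha with rfl | haF
    · have h2 : F.min' hne ≤ F.max' hne := Finset.min'_le _ _ (Finset.max'_mem F hne)
      omega
    · have := Finset.min'_le F a haF
      omega
  have hmemn : insert M F ∈ Schreier n := by
    apply schreier_mono hn hmem1
    intro a ha
    rcases Finset.mem_insert.1 ha with rfl | haF
    · have h2 : 1 ≤ F.max' hne + 1 := by omega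
      omega
    · have := Finset.min'_le F a haF
      omega
  have := hF.2 _ hmemn (Finset.subset_insert _ _)
  exact hMnF (this ▸ Finset.mem_insert_self M F)

lemma schreier_one_maximal_card {F : Finset ℕ} (hF : SchreierMaximal 1 F) (hne : F.Nonempty) :
    F.card = F.min' hne := by
  have h1 : F.card ≤ F.min' hne := schreier_one_card hF.1 _ (Finset.min'_mem F hne)
  have h2 := schreier_maximal_min_le_card le_rfl hF hne
  omega


lemma schreier_main : ∀ n : ℕ, 1 ≤ n → ∀ F : Finset ℕ, SchreierMaximal n F →
    ∀ hne : F.Nonempty,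
    ∃ lam : ℕ → ℝ, (∀ i ∈ F, 0 < lam i) ∧ (∑ i ∈ F, lam i) = 1 ∧
      ∀ m : ℕ, m < n → ∀ Δ ∈ Schreier m,
        (∑ i ∈ Δ ∩ F, lam i) ≤ (2^n - 1) / (F.min' hne : ℝ) := by
  intro n hn
  induction n, hn using Nat.le_induction with
  | base =>
    intro F hF hne
    have hcard : F.card = F.min' hne := schreier_one_maximal_card hF hne
    have hc1 : 0 < F.card := Finset.card_pos.2 hne
    have hcR : (0:ℝ) < (F.card : ℝ) := by exact_mod_cast hc1
    refine ⟨fun _ => (F.card : ℝ)⁻¹, fun i _ => by positivity, ?_, ?_⟩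
    · rw [Finset.sum_const, nsmul_eq_mul, mul_inv_cancel₀ (ne_of_gt hcR)]
    · intro m hm Δ hΔ
      interval_cases m
      have hd : (Δ ∩ F).card ≤ 1 := le_trans (Finset.card_le_card Finset.inter_subset_left) hΔ
      have : ∑ i ∈ Δ ∩ F, (F.card : ℝ)⁻¹ = ((Δ ∩ F).card : ℝ) * (F.card : ℝ)⁻¹ := by
        rw [Finset.sum_const, nsmul_eq_mul]
      rw [this]
      have h1 : ((Δ ∩ F).card : ℝ) ≤ 1 := by exact_mod_cast hd
      have : ((Δ ∩ F).card : ℝ) * (F.card : ℝ)⁻¹ ≤ 1 * (F.card : ℝ)⁻¹ := by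
        apply mul_le_mul_of_nonneg_right h1 (by positivity)
      refine le_trans this ?_
      rw [one_mul, ← hcard]
      norm_num
  | succ n hn ih =>
    intro F hF hne
    classical
    obtain ⟨P, E, hPF, hPle, hEmax, hEne, hEord, hEU⟩ := schreier_maximal_decomp n hF
    have hPmin : F.min' hne = P :=
      le_antisymm (Finset.min'_le F P hPF) (Finset.le_min' F hne P hPle)
    have hP1 : 1 ≤ P := by
      have hp := schreier_pos (by omega) hF.1 hne
      exact hp _ hPF
    have hPR : (0:ℝ) < (P:ℝ) := by exact_mod_cast hP1
    choose mu hmu1 hmu2 hmu3 using fun i : Fin P => ih (E i) (hEmax i) (hEne i)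
    set Pi : Fin P → ℕ := fun i => (E i).min' (hEne i) with hPi
    -- basic facts
    have hdisj : ∀ i j : Fin P, i ≠ j → Disjoint (E i) (E j) := by
      intro i j hij
      rw [Finset.disjoint_left]
      intro a hai haj
      rcases lt_or_gt_of_ne hij with h | h
      · exact absurd (hEord i j h a hai a haj) (by omega)
      · exact absurd (hEord j i h a haj a hai) (by omega)
    set lam : ℕ → ℝ := fun a => (P:ℝ)⁻¹ * ∑ i : Fin P, if a ∈ E i then mu i a else 0
      with hlam
    have hlam_at : ∀ i : Fin P, ∀ a ∈ E i, lam a = (P:ℝ)⁻¹ * mu i a := by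
      intro i a ha
      simp only [hlam]
      congr 1
      rw [Finset.sum_eq_single i]
      · rw [if_pos ha]
      · intro j _ hji
        rw [if_neg]
        intro haj
        exact (Finset.disjoint_left.1 (hdisj j i hji) haj) ha
      · intro h
        exact absurd (Finset.mem_univ i) h
    have hmu_nonneg : ∀ i : Fin P, ∀ a ∈ E i, 0 ≤ mu i a :=
      fun i a ha => le_of_lt (hmu1 i a ha)
    have hmu_le_one : ∀ (i : Fin P) (S : Finset ℕ), S ⊆ E i → ∑ a ∈ S, mu i a ≤ 1 := by
      intro i S hS
      rw [← hmu2 i]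
      exact Finset.sum_le_sum_of_subset_of_nonneg hS (fun a ha _ => hmu_nonneg i a ha)
    have hsplit : ∀ S : Finset ℕ, S ⊆ F →
        ∑ a ∈ S, lam a = ∑ i : Fin P, ∑ a ∈ S ∩ E i, lam a := by
      intro S hS
      have hSeq : S = Finset.univ.biUnion (fun i => S ∩ E i) := by
        ext a
        simp only [Finset.mem_biUnion, Finset.mem_univ, true_and, Finset.mem_inter]
        constructor
        · intro ha
          have : a ∈ F := hS ha
          rw [hEU] at this
          obtain ⟨i, -, hi⟩ := Finset.mem_biUnion.1 this
          exact ⟨i, ha, hi⟩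
        · rintro ⟨i, ha, -⟩; exact ha
      have hpd : Set.PairwiseDisjoint ((Finset.univ : Finset (Fin P)) : Set (Fin P))
          (fun i => S ∩ E i) := by
        intro i _ j _ hij
        exact Finset.disjoint_of_subset_left Finset.inter_subset_right
          (Finset.disjoint_of_subset_right Finset.inter_subset_right (hdisj i j hij))
      conv_lhs => rw [hSeq]
      exact Finset.sum_biUnion hpd
    have hblock : ∀ (i : Fin P) (S : Finset ℕ), S ⊆ E i →
        ∑ a ∈ S, lam a = (P:ℝ)⁻¹ * ∑ a ∈ S, mu i a := by
      intro i S hS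
      rw [Finset.mul_sum]
      exact Finset.sum_congr rfl (fun a ha => hlam_at i a (hS ha))
    have hsum1 : ∑ a ∈ F, lam a = 1 := by
      have h1 : F ∩ F = F := Finset.inter_self F
      calc ∑ a ∈ F, lam a = ∑ i : Fin P, ∑ a ∈ F ∩ E i, lam a :=
            hsplit F (Finset.Subset.refl F)
        _ = ∑ i : Fin P, (P:ℝ)⁻¹ := by
            apply Finset.sum_congr rfl
            intro i _
            have hFE : F ∩ E i = E i := Finset.inter_eq_right.2 (by
              intro a ha
              rw [hEU]
              exact Finset.mem_biUnion.2 ⟨i, Finset.mem_univ _, ha⟩)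
            rw [hFE, hblock i (E i) (Finset.Subset.refl _), hmu2 i, mul_one]
        _ = 1 := by
            rw [Finset.sum_const, Finset.card_univ, Fintype.card_fin, nsmul_eq_mul,
              mul_inv_cancel₀ (ne_of_gt hPR)]
    refine ⟨lam, ?_, hsum1, ?_⟩
    · intro a ha
      rw [hEU] at ha
      obtain ⟨i, -, hi⟩ := Finset.mem_biUnion.1 ha
      rw [hlam_at i a hi]
      exact mul_pos (by positivity) (hmu1 i a hi)
    · intro m hm Δ hΔ
      have h2n1 : (1:ℝ) ≤ (2:ℝ)^n := one_le_pow₀ (by norm_num)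
      have hone_le : (1:ℝ) ≤ (2:ℝ)^(n+1) - 1 := by
        have h2 : (2:ℝ)^(n+1) = 2 * 2^n := by ring
        rw [h2]; linarith
      have hRHS0 : (0:ℝ) ≤ ((2:ℝ)^(n+1) - 1) / (P:ℝ) := by
        apply div_nonneg _ (le_of_lt hPR)
        linarith
      have hinv_le : (P:ℝ)⁻¹ ≤ ((2:ℝ)^(n+1) - 1) / (P:ℝ) := by
        rw [inv_eq_one_div]
        gcongr
      rw [hPmin]
      set Δ' := Δ ∩ F with hΔ'
      have hΔ'S : Δ' ∈ Schreier m := schreier_subset m Finset.inter_subset_left hΔ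
      have hΔ'F : Δ' ⊆ F := Finset.inter_subset_right
      rcases Finset.eq_empty_or_nonempty Δ' with hE0 | hΔ'ne
      · rw [hE0, Finset.sum_empty]
        exact hRHS0
      cases m with
      | zero =>
        have hcard : Δ'.card = 1 := by
          have h1 : Δ'.card ≤ 1 := le_trans (Finset.card_le_card Finset.inter_subset_left) hΔ
          have h2 : 1 ≤ Δ'.card := Finset.card_pos.2 hΔ'ne
          omega
        obtain ⟨a, ha⟩ := Finset.card_eq_one.1 hcard
        rw [ha, Finset.sum_singleton]
        have haF : a ∈ F := hΔ'F (ha ▸ Finset.mem_singleton_self a)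
        rw [hEU] at haF
        obtain ⟨i, -, hi⟩ := Finset.mem_biUnion.1 haF
        rw [hlam_at i a hi]
        have h1 : mu i a ≤ 1 := by
          have := Finset.single_le_sum (f := mu i) (fun b hb => hmu_nonneg i b hb) hi
          rw [hmu2 i] at this
          exact this
        calc (P:ℝ)⁻¹ * mu i a ≤ (P:ℝ)⁻¹ * 1 :=
              mul_le_mul_of_nonneg_left h1 (by positivity)
          _ = (P:ℝ)⁻¹ := mul_one _
          _ ≤ _ := hinv_le
      | succ m' =>
        obtain ⟨d, D, hDS, hDne, hDord, hDd, hDU⟩ := hΔ'S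
        set a₀ := Δ'.min' hΔ'ne with ha₀
        have ha₀Δ' : a₀ ∈ Δ' := Finset.min'_mem _ _
        have ha₀F : a₀ ∈ F := hΔ'F ha₀Δ'
        have ha₀F' := ha₀F
        rw [hEU] at ha₀F'
        obtain ⟨i₁, -, hi₁⟩ := Finset.mem_biUnion.1 ha₀F'
        have hd_le : d ≤ a₀ := hDd a₀ ha₀Δ'
        set T : Fin P → ℝ := fun i => ∑ a ∈ Δ' ∩ E i, mu i a with hT
        have hgoal_eq : ∑ a ∈ Δ', lam a = (P:ℝ)⁻¹ * ∑ i : Fin P, T i := by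
          rw [hsplit Δ' hΔ'F, Finset.mul_sum]
          apply Finset.sum_congr rfl
          intro i _
          simp only [hT]
          exact hblock i (Δ' ∩ E i) Finset.inter_subset_right
        have hT0 : ∀ i, 0 ≤ T i :=
          fun i => Finset.sum_nonneg (fun a ha => hmu_nonneg i a (Finset.mem_inter.1 ha).2)
        have hTi₁ : T i₁ ≤ 1 := hmu_le_one i₁ _ Finset.inter_subset_right
        have hTlt : ∀ i : Fin P, i < i₁ → T i = 0 := by
          intro i hi
          simp only [hT]
          have hempty : Δ' ∩ E i = ∅ := by
            rw [Finset.eq_empty_iff_forall_notMem]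
            intro a ha
            have h1 : a ∈ Δ' := (Finset.mem_inter.1 ha).1
            have h2 : a ∈ E i := (Finset.mem_inter.1 ha).2
            have h3 : a < a₀ := hEord i i₁ hi a h2 a₀ hi₁
            have h4 : a₀ ≤ a := Finset.min'_le _ _ h1
            omega
          rw [hempty, Finset.sum_empty]
        have hcard_le : ∀ i : Fin P, (E i).card ≤ (E i).max' (hEne i) - Pi i + 1 := by
          intro i
          have hsub : E i ⊆ Finset.Icc (Pi i) ((E i).max' (hEne i)) := by
            intro a ha
            rw [Finset.mem_Icc]
            exact ⟨Finset.min'_le _ _ ha, Finset.le_max' _ _ ha⟩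
          have h1 := Finset.card_le_card hsub
          rw [Nat.card_Icc] at h1
          omega
        have hmin_card : ∀ i : Fin P, Pi i ≤ (E i).card := fun i =>
          schreier_maximal_min_le_card hn (hEmax i) (hEne i)
        have hdouble : ∀ (i : Fin P) (h : (i:ℕ)+1 < P), 2 * Pi i ≤ Pi ⟨(i:ℕ)+1, h⟩ := by
          intro i h
          have h1 : (E i).max' (hEne i) < Pi ⟨(i:ℕ)+1, h⟩ :=
            hEord i ⟨(i:ℕ)+1, h⟩ (by simp [Fin.lt_def]) _ (Finset.max'_mem _ _)
              _ (Finset.min'_mem _ _)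
          have h2 := hcard_le i
          have h3 := hmin_card i
          have h4 : Pi i ≤ (E i).max' (hEne i) := Finset.min'_le _ _ (Finset.max'_mem _ _)
          omega
        have hpow : ∀ (r : ℕ) (h0 : (i₁:ℕ)+1 < P) (h : (i₁:ℕ)+1+r < P),
            2^r * Pi ⟨(i₁:ℕ)+1, h0⟩ ≤ Pi ⟨(i₁:ℕ)+1+r, h⟩ := by
          intro r
          induction r with
          | zero =>
            intro h0 h
            have heq : (⟨(i₁:ℕ)+1+0, h⟩ : Fin P) = ⟨(i₁:ℕ)+1, h0⟩ :=
              Fin.ext (by simp only [Fin.val_mk])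
            rw [heq, pow_zero, one_mul]
          | succ r ihr =>
            intro h0 h
            have h' : (i₁:ℕ)+1+r < P := by omega
            have hstep := hdouble ⟨(i₁:ℕ)+1+r, h'⟩ (by simp; omega)
            have heq : (⟨((⟨(i₁:ℕ)+1+r, h'⟩ : Fin P) : ℕ)+1, by simp; omega⟩ : Fin P)
                = ⟨(i₁:ℕ)+1+(r+1), h⟩ := Fin.ext (by simp only [Fin.val_mk]; omega)
            rw [heq] at hstep
            have hihr := ihr h0 h'
            calc 2^(r+1) * Pi ⟨(i₁:ℕ)+1, h0⟩ = 2 * (2^r * Pi ⟨(i₁:ℕ)+1, h0⟩) := by ring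
              _ ≤ 2 * Pi ⟨(i₁:ℕ)+1+r, h'⟩ := by omega
              _ ≤ Pi ⟨(i₁:ℕ)+1+(r+1), h⟩ := hstep
        have hd1 : ∀ h0 : (i₁:ℕ)+1 < P, d + 1 ≤ Pi ⟨(i₁:ℕ)+1, h0⟩ := by
          intro h0
          have h1 : a₀ < Pi ⟨(i₁:ℕ)+1, h0⟩ :=
            hEord i₁ ⟨(i₁:ℕ)+1, h0⟩ (by simp [Fin.lt_def]) a₀ hi₁ _ (Finset.min'_mem _ _)
          omega
        have hc0 : (0:ℝ) ≤ (2:ℝ)^n - 1 := by linarith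
        have hTgt : ∀ i : Fin P, i₁ < i →
            T i ≤ ((2:ℝ)^n - 1) * ((1:ℝ)/2)^((i:ℕ)-(i₁:ℕ)-1) := by
          intro i hi
          have hiP : (i:ℕ) < P := i.2
          have hii : (i₁:ℕ) < (i:ℕ) := hi
          have h0 : (i₁:ℕ)+1 < P := by omega
          set r := (i:ℕ) - (i₁:ℕ) - 1 with hr
          have hPi_ge : 2^r * (d+1) ≤ Pi i := by
            have h1 := hpow r h0 (by omega)
            have h2 := hd1 h0
            have h3 : (⟨(i₁:ℕ)+1+r, by omega⟩ : Fin P) = i := Fin.ext (by simp only [Fin.val_mk]; omega)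
            calc 2^r * (d+1) ≤ 2^r * Pi ⟨(i₁:ℕ)+1, h0⟩ := Nat.mul_le_mul_left _ h2
              _ ≤ Pi ⟨(i₁:ℕ)+1+r, by omega⟩ := h1
              _ = Pi i := by rw [h3]
          have hPiR : (0:ℝ) < ((Pi i : ℕ) : ℝ) := by
            have : 1 ≤ Pi i := by
              have := hPi_ge
              have h2r : 1 ≤ 2^r := Nat.one_le_two_pow
              nlinarith
            exact_mod_cast Nat.lt_of_lt_of_le Nat.zero_lt_one this
          have hTi : T i ≤ (d:ℝ) * (((2:ℝ)^n - 1) / ((Pi i : ℕ) : ℝ)) := by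
            simp only [hT]
            have hsplitD : Δ' ∩ E i = Finset.univ.biUnion (fun j : Fin d => D j ∩ E i) := by
              conv_lhs => rw [hDU]
              ext a
              simp only [Finset.mem_inter, Finset.mem_biUnion, Finset.mem_univ, true_and]
              tauto
            rw [hsplitD]
            have hpdD : Set.PairwiseDisjoint ((Finset.univ : Finset (Fin d)) : Set (Fin d))
                (fun j => D j ∩ E i) := by
              intro j1 _ j2 _ hj12
              have hdisjD : Disjoint (D j1) (D j2) := by
                rw [Finset.disjoint_left]
                intro a ha1 ha2
                rcases lt_or_gt_of_ne hj12 with h | h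
                · exact absurd (hDord j1 j2 h a ha1 a ha2) (by omega)
                · exact absurd (hDord j2 j1 h a ha2 a ha1) (by omega)
              exact Finset.disjoint_of_subset_left Finset.inter_subset_left
                (Finset.disjoint_of_subset_right Finset.inter_subset_left hdisjD)
            rw [Finset.sum_biUnion hpdD]
            calc ∑ j : Fin d, ∑ a ∈ D j ∩ E i, mu i a
                ≤ ∑ j : Fin d, ((2:ℝ)^n - 1) / ((Pi i : ℕ) : ℝ) := by
                  apply Finset.sum_le_sum
                  intro j _
                  exact hmu3 i m' (by omega) (D j) (hDS j)
              _ = (d:ℝ) * (((2:ℝ)^n - 1) / ((Pi i : ℕ) : ℝ)) := by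
                  rw [Finset.sum_const, Finset.card_univ, Fintype.card_fin, nsmul_eq_mul]
          have hfrac : (d:ℝ) / ((Pi i : ℕ) : ℝ) ≤ ((1:ℝ)/2)^r := by
            rw [div_pow, one_pow, div_le_div_iff₀ hPiR (by positivity)]
            have : (d:ℝ) * 2^r ≤ ((Pi i : ℕ) : ℝ) := by
              have hnat : d * 2^r ≤ Pi i := by
                calc d * 2^r ≤ (d+1) * 2^r := mul_le_mul_left (by omega) (2^r)
                  _ = 2^r * (d+1) := by ring
                  _ ≤ Pi i := hPi_ge
              calc (d:ℝ) * 2^r = ((d * 2^r : ℕ) : ℝ) := by push_cast; ring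
                _ ≤ _ := by exact_mod_cast hnat
            linarith
          calc T i ≤ (d:ℝ) * (((2:ℝ)^n - 1) / ((Pi i : ℕ) : ℝ)) := hTi
            _ = ((2:ℝ)^n - 1) * ((d:ℝ) / ((Pi i : ℕ) : ℝ)) := by ring
            _ ≤ ((2:ℝ)^n - 1) * ((1:ℝ)/2)^r := mul_le_mul_of_nonneg_left hfrac hc0
        have hgeo : ∑ i ∈ Finset.univ.filter (fun i : Fin P => ¬ i ≤ i₁),
            ((1:ℝ)/2)^((i:ℕ)-(i₁:ℕ)-1) ≤ 2 := by
          have hinj : ∀ x ∈ Finset.univ.filter (fun i : Fin P => ¬ i ≤ i₁),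
              ∀ y ∈ Finset.univ.filter (fun i : Fin P => ¬ i ≤ i₁),
              (x:ℕ)-(i₁:ℕ)-1 = (y:ℕ)-(i₁:ℕ)-1 → x = y := by
            intro x hx y hy hxy
            have hx' : i₁ < x := not_le.1 (Finset.mem_filter.1 hx).2
            have hy' : i₁ < y := not_le.1 (Finset.mem_filter.1 hy).2
            have hx'' : (i₁:ℕ) < (x:ℕ) := hx'
            have hy'' : (i₁:ℕ) < (y:ℕ) := hy'
            exact Fin.ext (by omega)
          have himg : ∑ i ∈ Finset.univ.filter (fun i : Fin P => ¬ i ≤ i₁),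
              ((1:ℝ)/2)^((i:ℕ)-(i₁:ℕ)-1)
              = ∑ r ∈ (Finset.univ.filter (fun i : Fin P => ¬ i ≤ i₁)).image
                  (fun i : Fin P => (i:ℕ)-(i₁:ℕ)-1), ((1:ℝ)/2)^r :=
            (Finset.sum_image (s := Finset.univ.filter (fun i : Fin P => ¬ i ≤ i₁))
              (g := fun i : Fin P => (i:ℕ)-(i₁:ℕ)-1)
              (f := fun r : ℕ => ((1:ℝ)/2)^r) hinj).symm
          rw [himg]
          have hsub : (Finset.univ.filter (fun i : Fin P => ¬ i ≤ i₁)).image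
              (fun i : Fin P => (i:ℕ)-(i₁:ℕ)-1) ⊆ Finset.range P := by
            intro r hr
            obtain ⟨i, -, rfl⟩ := Finset.mem_image.1 hr
            exact Finset.mem_range.2 (by have := i.2; omega)
          calc _ ≤ ∑ r ∈ Finset.range P, ((1:ℝ)/2)^r :=
                Finset.sum_le_sum_of_subset_of_nonneg hsub (fun r _ _ => by positivity)
            _ ≤ 2 := by
                rw [geom_sum_eq (by norm_num : ((1:ℝ)/2) ≠ 1)]
                have h1 : (0:ℝ) ≤ ((1:ℝ)/2)^P := by positivity
                have heq : (((1:ℝ)/2)^P - 1)/(((1:ℝ)/2) - 1) = 2*(1 - ((1:ℝ)/2)^P) := by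
                  ring
                rw [heq]
                linarith
        have hsum_split : ∑ i : Fin P, T i ≤ 1 + ((2:ℝ)^n - 1) * 2 := by
          rw [← Finset.sum_filter_add_sum_filter_not Finset.univ (fun i => i ≤ i₁) T]
          have hA : ∑ i ∈ Finset.univ.filter (fun i : Fin P => i ≤ i₁), T i ≤ 1 := by
            have hb : ∀ i ∈ Finset.univ.filter (fun i : Fin P => i ≤ i₁),
                T i ≤ if i = i₁ then (1:ℝ) else 0 := by
              intro i hi'
              by_cases h : i = i₁
              · rw [if_pos h, h]; exact hTi₁
              · rw [if_neg h]
                have : i < i₁ := lt_of_le_of_ne (Finset.mem_filter.1 hi').2 h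
                rw [hTlt i this]
            calc ∑ i ∈ Finset.univ.filter (fun i : Fin P => i ≤ i₁), T i
                ≤ ∑ i ∈ Finset.univ.filter (fun i : Fin P => i ≤ i₁),
                  (if i = i₁ then (1:ℝ) else 0) := Finset.sum_le_sum hb
              _ ≤ 1 := by
                  rw [Finset.sum_ite_eq' (Finset.univ.filter (fun i : Fin P => i ≤ i₁)) i₁
                    (fun _ => (1:ℝ))]
                  split <;> norm_num
          have hB : ∑ i ∈ Finset.univ.filter (fun i : Fin P => ¬ i ≤ i₁), T i
              ≤ ((2:ℝ)^n - 1) * 2 := by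
            calc ∑ i ∈ Finset.univ.filter (fun i : Fin P => ¬ i ≤ i₁), T i
                ≤ ∑ i ∈ Finset.univ.filter (fun i : Fin P => ¬ i ≤ i₁),
                  ((2:ℝ)^n - 1) * ((1:ℝ)/2)^((i:ℕ)-(i₁:ℕ)-1) := by
                  apply Finset.sum_le_sum
                  intro i hi'
                  exact hTgt i (not_le.1 (Finset.mem_filter.1 hi').2)
              _ = ((2:ℝ)^n - 1) * ∑ i ∈ Finset.univ.filter (fun i : Fin P => ¬ i ≤ i₁),
                  ((1:ℝ)/2)^((i:ℕ)-(i₁:ℕ)-1) := by rw [Finset.mul_sum]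
              _ ≤ ((2:ℝ)^n - 1) * 2 := mul_le_mul_of_nonneg_left hgeo hc0
          linarith
        calc ∑ a ∈ Δ', lam a = (P:ℝ)⁻¹ * ∑ i : Fin P, T i := hgoal_eq
          _ ≤ (P:ℝ)⁻¹ * (1 + ((2:ℝ)^n - 1) * 2) := by
              apply mul_le_mul_of_nonneg_left hsum_split (by positivity)
          _ = ((2:ℝ)^(n+1) - 1) / (P:ℝ) := by
              rw [div_eq_inv_mul]
              ring

/-- for every `n` and `ε > 0` there is a `k` such that every maximal member
`F` of `S_n` with `k < min F` supports an `(n, ε)`-special convex combination: positive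
weights `(λ_i)_{i∈F}` summing to `1` with `Σ_{i ∈ Δ ∩ F} λ_i < ε` for every `m < n` and
every `Δ ∈ S_m`. -/
theorem statement8 (n : ℕ) (ε : ℝ) (hε : 0 < ε) :
    ∃ k : ℕ, ∀ F : Finset ℕ, SchreierMaximal n F → (k : WithTop ℕ) < F.min →
      ∃ lam : ℕ → ℝ,
        (∀ i ∈ F, 0 < lam i) ∧
        (∑ i ∈ F, lam i) = 1 ∧
        ∀ m : ℕ, m < n → ∀ Δ ∈ Schreier m, (∑ i ∈ Δ ∩ F, lam i) < ε := by
  rcases Nat.eq_zero_or_pos n with rfl | hn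
  · refine ⟨0, ?_⟩
    intro F hF hmin
    have hne : F.Nonempty := schreier_maximal_nonempty hF
    have hcard : F.card ≤ 1 := hF.1
    have hc1 : F.card = 1 := by
      have := Finset.card_pos.2 hne
      omega
    obtain ⟨a, ha⟩ := Finset.card_eq_one.1 hc1
    refine ⟨fun _ => 1, fun i _ => one_pos, ?_, ?_⟩
    · rw [ha, Finset.sum_singleton]
    · intro m hm
      omega
  · obtain ⟨k, hk⟩ := exists_nat_ge ((2:ℝ)^n / ε)
    refine ⟨k, ?_⟩
    intro F hF hmin
    have hne : F.Nonempty := schreier_maximal_nonempty hF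
    have hminEq : F.min = (F.min' hne : WithTop ℕ) := (Finset.coe_min' hne).symm
    rw [hminEq] at hmin
    have hkP : k < F.min' hne := by exact_mod_cast hmin
    obtain ⟨lam, h1, h2, h3⟩ := schreier_main n hn F hF hne
    refine ⟨lam, h1, h2, ?_⟩
    intro m hm Δ hΔ
    have hb := h3 m hm Δ hΔ
    have h2n : (1:ℝ) ≤ (2:ℝ)^n := one_le_pow₀ (by norm_num)
    have hk1R : (0:ℝ) < (k:ℝ) + 1 := by positivity
    have hPk : ((k:ℝ)+1) ≤ ((F.min' hne : ℕ) : ℝ) := by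
      have : k + 1 ≤ F.min' hne := hkP
      exact_mod_cast this
    calc ∑ i ∈ Δ ∩ F, lam i ≤ ((2:ℝ)^n - 1) / ((F.min' hne : ℕ) : ℝ) := hb
      _ ≤ ((2:ℝ)^n - 1) / ((k:ℝ)+1) := by
          gcongr
      _ < ε := by
          rw [div_lt_iff₀ hk1R]
          have hke : (2:ℝ)^n ≤ (k:ℝ) * ε := (div_le_iff₀ hε).1 hk
          nlinarith
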